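/- Let (X,B,μ) be a measure space, q a lower bounded closed quadratic form on L²(X,μ) satisfying the first Beurling–Deny criterion, and D_q ⊆ D(q) a subspace that is an ideal of D(q) and is dense in D(q) with respect to the form norm ‖·‖_q. Then for every v ∈ D(q) with v ≥ 0 μ-almost everywhere, there exists a sequence (v_n) in D_q with 0 ≤ v_n ≤ v μ-almost everywhere for all n and ‖v_n − v‖_q → 0. -/

import Mathlib

open MeasureTheory
open scoped ComplexInnerProductSpace

noncomputable section

/-- A (densely defined) quadratic form on a complex Hilbert space `H`: a dense domain
`dom` and a map `Q` which, on the domain, is absolutely homogeneous of degree two and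
satisfies the parallelogram identity. (The values of `Q` outside of `dom` are irrelevant.) -/
structure QForm (H : Type*) [NormedAddCommGroup H] [InnerProductSpace ℂ H] where
  dom : Submodule ℂ H
  dense_dom : Dense (dom : Set H)
  Q : H → ℝ
  smul_eq : ∀ (a : ℂ), ∀ f ∈ dom, Q (a • f) = ‖a‖ ^ 2 * Q f
  parallelogram : ∀ f ∈ dom, ∀ g ∈ dom, Q (f + g) + Q (f - g) = 2 * Q f + 2 * Q g

/-- The squared form norm `‖f‖_q² = q(f) + μ'·‖f‖²` of a quadratic form, for a shift `μ'`. -/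
def QForm.normSq {H : Type*} [NormedAddCommGroup H] [InnerProductSpace ℂ H]
    (q : QForm H) (μ' : ℝ) (f : H) : ℝ :=
  q.Q f + μ' * ‖f‖ ^ 2

/-- A quadratic form on `L²(X,μ)` is real if the domain is conjugation invariant and
`q(conj f) = q(f)`. -/
def QForm.IsReal {X : Type*} [MeasurableSpace X] {μ : Measure X}
    (q : QForm (Lp ℂ 2 μ)) : Prop :=
  ∀ f ∈ q.dom, ∃ g ∈ q.dom,
    (∀ᵐ x ∂μ, g x = (starRingEnd ℂ) (f x)) ∧ q.Q g = q.Q f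

/-- The first Beurling–Deny criterion for a quadratic form on `L²(X,μ)`: the form is real,
and `f ∈ D(q)` implies `|f| ∈ D(q)` with `q(|f|) ≤ q(f)`. -/
def QForm.BeurlingDeny {X : Type*} [MeasurableSpace X] {μ : Measure X}
    (q : QForm (Lp ℂ 2 μ)) : Prop :=
  q.IsReal ∧ ∀ f ∈ q.dom, ∃ g ∈ q.dom,
    (∀ᵐ x ∂μ, g x = ((‖f x‖ : ℝ) : ℂ)) ∧ q.Q g ≤ q.Q f

end


noncomputable section

/-- Closedness of a quadratic form with respect to the form norm given by the shift `μ'`: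
every Cauchy sequence in the domain converges, in the form norm, to an element of the
domain. -/
def QForm.ClosedWith {H : Type*} [NormedAddCommGroup H] [InnerProductSpace ℂ H]
    (q : QForm H) (μ' : ℝ) : Prop :=
  ∀ u : ℕ → H, (∀ n, u n ∈ q.dom) →
    (∀ ε > (0 : ℝ), ∃ N : ℕ, ∀ i ≥ N, ∀ j ≥ N, q.normSq μ' (u i - u j) < ε) →
    ∃ v ∈ q.dom, Filter.Tendsto (fun n => q.normSq μ' (u n - v)) Filter.atTop (nhds 0)

end


noncomputable section AuxStmt5

namespace QForm

variable {H : Type*} [NormedAddCommGroup H] [InnerProductSpace ℂ H]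
variable (q : QForm H) (μ' : ℝ)

lemma Q_zero : q.Q 0 = 0 := by
  have h := q.smul_eq 0 0 q.dom.zero_mem
  simpa using h

lemma normSq_zero : q.normSq μ' 0 = 0 := by simp [QForm.normSq, q.Q_zero]

lemma normSq_smul (a : ℂ) {f : H} (hf : f ∈ q.dom) :
    q.normSq μ' (a • f) = ‖a‖ ^ 2 * q.normSq μ' f := by
  simp only [QForm.normSq, q.smul_eq a f hf, norm_smul, mul_pow]
  ring

lemma normSq_neg {f : H} (hf : f ∈ q.dom) : q.normSq μ' (-f) = q.normSq μ' f := by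
  have h := q.normSq_smul μ' (-1) hf
  simpa using h

lemma normSq_par {f g : H} (hf : f ∈ q.dom) (hg : g ∈ q.dom) :
    q.normSq μ' (f + g) + q.normSq μ' (f - g) = 2 * q.normSq μ' f + 2 * q.normSq μ' g := by
  have h1 := q.parallelogram f hf g hg
  have h2 := parallelogram_law_with_norm ℂ f g
  simp only [QForm.normSq]
  linear_combination h1 + μ' * h2

variable {lam : ℝ}

lemma Q_add_le (hlb : ∀ f ∈ q.dom, -lam * ‖f‖ ^ 2 ≤ q.Q f) {f g : H}
    (hf : f ∈ q.dom) (hg : g ∈ q.dom) :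
    q.Q (f + g) ≤ 2 * q.Q f + 2 * q.Q g + (max lam 0) * ‖f - g‖ ^ 2 := by
  have h1 := q.parallelogram f hf g hg
  have h2 := hlb (f - g) (Submodule.sub_mem _ hf hg)
  have h3 : -(max lam 0) * ‖f - g‖ ^ 2 ≤ -lam * ‖f - g‖ ^ 2 := by
    exact mul_le_mul_of_nonneg_right (neg_le_neg (le_max_left _ _)) (by positivity)
  linarith

lemma Q_sub_le (hlb : ∀ f ∈ q.dom, -lam * ‖f‖ ^ 2 ≤ q.Q f) {f g : H}
    (hf : f ∈ q.dom) (hg : g ∈ q.dom) :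
    q.Q (f - g) ≤ 2 * q.Q f + 2 * q.Q g + (max lam 0) * ‖f + g‖ ^ 2 := by
  have h1 := q.parallelogram f hf g hg
  have h2 := hlb (f + g) (Submodule.add_mem _ hf hg)
  have h3 : -(max lam 0) * ‖f + g‖ ^ 2 ≤ -lam * ‖f + g‖ ^ 2 := by
    exact mul_le_mul_of_nonneg_right (neg_le_neg (le_max_left _ _)) (by positivity)
  linarith

lemma Q_half {f : H} (hf : f ∈ q.dom) : q.Q ((2⁻¹ : ℂ) • f) = q.Q f / 4 := by
  have h := q.smul_eq (2⁻¹ : ℂ) f hf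
  rw [h, show ‖(2⁻¹ : ℂ)‖ ^ 2 = 1 / 4 by norm_num]
  ring

end QForm

end AuxStmt5
noncomputable section AuxStmt5b

open MeasureTheory Filter

/-- Bundled lower-bounded closed quadratic form. -/
structure ClosedQF (H : Type*) [NormedAddCommGroup H] [InnerProductSpace ℂ H] where
  q : QForm H
  lam : ℝ
  mu' : ℝ
  hlb : ∀ f ∈ q.dom, -lam * ‖f‖ ^ 2 ≤ q.Q f
  hmu : lam < mu'
  hclosed : q.ClosedWith mu'

namespace ClosedQF

variable {H : Type*} [NormedAddCommGroup H] [InnerProductSpace ℂ H] (c : ClosedQF H)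

/-- The squared form norm. -/
def N (f : H) : ℝ := c.q.normSq c.mu' f

lemma N_lower {f : H} (hf : f ∈ c.q.dom) : (c.mu' - c.lam) * ‖f‖ ^ 2 ≤ c.N f := by
  have h := c.hlb f hf
  simp only [N, QForm.normSq]
  nlinarith

lemma N_nonneg {f : H} (hf : f ∈ c.q.dom) : 0 ≤ c.N f := by
  refine le_trans ?_ (c.N_lower hf)
  have h2 : (0:ℝ) ≤ c.mu' - c.lam := by linarith [c.hmu]
  positivity

lemma N_par {f g : H} (hf : f ∈ c.q.dom) (hg : g ∈ c.q.dom) :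
    c.N (f + g) + c.N (f - g) = 2 * c.N f + 2 * c.N g :=
  c.q.normSq_par c.mu' hf hg

lemma N_neg {f : H} (hf : f ∈ c.q.dom) : c.N (-f) = c.N f := c.q.normSq_neg c.mu' hf

lemma N_zero : c.N 0 = 0 := c.q.normSq_zero c.mu'

lemma N_smul (a : ℂ) {f : H} (hf : f ∈ c.q.dom) : c.N (a • f) = ‖a‖ ^ 2 * c.N f :=
  c.q.normSq_smul c.mu' a hf

lemma N_smul_real (t : ℝ) {f : H} (hf : f ∈ c.q.dom) : c.N (t • f) = t ^ 2 * c.N f := by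
  rw [← IsScalarTower.algebraMap_smul ℂ t f, Complex.coe_algebraMap, c.N_smul _ hf]
  simp [sq_abs]

lemma N_add_le {f g : H} (hf : f ∈ c.q.dom) (hg : g ∈ c.q.dom) :
    c.N (f + g) ≤ 2 * c.N f + 2 * c.N g := by
  have h1 := c.N_par hf hg
  have h2 := c.N_nonneg (Submodule.sub_mem _ hf hg)
  linarith

/-- The domain, as a type which will carry the form-norm Hilbert structure. -/
def Dom : Type _ := ↥c.q.dom

instance : AddCommGroup c.Dom := inferInstanceAs (AddCommGroup ↥c.q.dom)
instance : Module ℝ c.Dom := inferInstanceAs (Module ℝ ↥c.q.dom)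

/-- Polarization of the form norm. -/
def P (x z : H) : ℝ := (c.N (x + z) - c.N (x - z)) / 4

lemma P_comm {x z : H} (hx : x ∈ c.q.dom) (hz : z ∈ c.q.dom) : c.P x z = c.P z x := by
  have h1 : x + z = z + x := add_comm _ _
  have h2 : c.N (x - z) = c.N (z - x) := by
    rw [show z - x = -(x - z) from (neg_sub x z).symm, c.N_neg (Submodule.sub_mem _ hx hz)]
  simp only [P, h1, h2]

lemma P_zero_left {z : H} (hz : z ∈ c.q.dom) : c.P 0 z = 0 := by
  rw [P, zero_add, zero_sub, c.N_neg hz, sub_self, zero_div]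

lemma P_self {x : H} (hx : x ∈ c.q.dom) : c.P x x = c.N x := by
  have h1 : x + x = (2 : ℂ) • x := (two_smul ℂ x).symm
  have h2 : c.N ((2 : ℂ) • x) = 4 * c.N x := by
    rw [c.N_smul _ hx, show ‖(2 : ℂ)‖ ^ 2 = 4 by norm_num]
  rw [P, sub_self, c.N_zero, h1, h2]
  ring

lemma P_mid {x y z : H} (hx : x ∈ c.q.dom) (hy : y ∈ c.q.dom) (hz : z ∈ c.q.dom) :
    c.P x z + c.P y z = 2 * c.P ((2⁻¹ : ℂ) • (x + y)) z := by
  set m := (2⁻¹ : ℂ) • (x + y) with hm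
  set b := (2⁻¹ : ℂ) • (x - y) with hb
  have hmd : m ∈ c.q.dom := Submodule.smul_mem _ _ (Submodule.add_mem _ hx hy)
  have hbd : b ∈ c.q.dom := Submodule.smul_mem _ _ (Submodule.sub_mem _ hx hy)
  have e1 : m + z + b = x + z := by rw [hm, hb]; module
  have e2 : m + z - b = y + z := by rw [hm, hb]; module
  have e3 : m - z + b = x - z := by rw [hm, hb]; module
  have e4 : m - z - b = y - z := by rw [hm, hb]; module
  have p1 := c.N_par (Submodule.add_mem _ hmd hz) hbd
  have p2 := c.N_par (Submodule.sub_mem _ hmd hz) hbd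
  rw [e1, e2] at p1
  rw [e3, e4] at p2
  simp only [P]
  linarith

lemma P_add_left {x y z : H} (hx : x ∈ c.q.dom) (hy : y ∈ c.q.dom) (hz : z ∈ c.q.dom) :
    c.P (x + y) z = c.P x z + c.P y z := by
  have h1 := c.P_mid (Submodule.add_mem _ hx hy) c.q.dom.zero_mem hz
  rw [c.P_zero_left hz, add_zero (x + y)] at h1
  have h2 := c.P_mid hx hy hz
  linarith

lemma P_bound {x z : H} (hx : x ∈ c.q.dom) (hz : z ∈ c.q.dom) :
    |c.P x z| ≤ (c.N x + c.N z) / 2 := by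
  have h := c.N_par hx hz
  have h1 := c.N_nonneg (Submodule.add_mem _ hx hz)
  have h2 := c.N_nonneg (Submodule.sub_mem _ hx hz)
  rw [abs_le]
  constructor <;> simp only [P] <;> linarith

lemma P_smul_left (t : ℝ) {x z : H} (hx : x ∈ c.q.dom) (hz : z ∈ c.q.dom) :
    c.P (t • x) z = t * c.P x z := by
  set ψ : ℝ → ℝ := fun s => c.P (s • x) z with hψ
  have hmem : ∀ s : ℝ, s • x ∈ c.q.dom := fun s => Submodule.smul_of_tower_mem _ s hx
  have hadd : ∀ s u : ℝ, ψ (s + u) = ψ s + ψ u := by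
    intro s u
    simp only [hψ, add_smul]
    exact c.P_add_left (hmem s) (hmem u) hz
  have hzero : ψ 0 = 0 := by
    simp only [hψ, zero_smul]
    exact c.P_zero_left hz
  have hnat : ∀ (n : ℕ) (s : ℝ), ψ (n * s) = n * ψ s := by
    intro n
    induction n with
    | zero => intro s; simp [hzero]
    | succ k ih =>
      intro s
      have : ((k : ℝ) + 1) * s = (k : ℝ) * s + s := by ring
      push_cast
      rw [this, hadd, ih]
      ring
  have hneg : ∀ u : ℝ, ψ (-u) = -ψ u := by
    intro u
    have h := hadd u (-u)
    simp only [add_neg_cancel, hzero] at h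
    linarith
  have hint : ∀ (m : ℤ) (s : ℝ), ψ (m * s) = m * ψ s := by
    intro m s
    induction m using Int.induction_on with
    | zero => simpa using hzero
    | succ k ih =>
      have h := hnat (k + 1) s
      push_cast at h ⊢
      exact h
    | pred k ih =>
      have h := hnat (k + 1) s
      push_cast at h ⊢
      rw [show (-(k : ℝ) - 1) * s = -(((k : ℝ) + 1) * s) by ring, hneg, h]
      ring
  have hbound : ∀ s : ℝ, |s| ≤ 1 → |ψ s| ≤ (c.N x + c.N z) / 2 := by
    intro s hs
    have hb := c.P_bound (hmem s) hz
    have hNs : c.N (s • x) = s ^ 2 * c.N x := c.N_smul_real s hx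
    have hs2 : s ^ 2 ≤ 1 := by nlinarith [abs_nonneg s, le_abs_self s, neg_abs_le s]
    have hNx := c.N_nonneg hx
    have : c.N (s • x) ≤ c.N x := by nlinarith
    simp only [hψ]
    calc |c.P (s • x) z| ≤ (c.N (s • x) + c.N z) / 2 := hb
      _ ≤ (c.N x + c.N z) / 2 := by linarith
  -- show ψ t = t * ψ 1, hence the claim
  have hone : ψ 1 = c.P x z := by simp [hψ]
  have key : ψ t = t * ψ 1 := by
    by_contra hne
    set θ := ψ t - t * ψ 1 with hθ
    have hθne : θ ≠ 0 := fun h => hne (by linarith [sub_eq_zero.mp h])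
    set B := (c.N x + c.N z) / 2 + |ψ 1| with hB
    have hkey : ∀ n : ℕ, |(n : ℝ) * θ| ≤ B := by
      intro n
      have h1 : ψ ((n : ℝ) * t) = (n : ℝ) * ψ t := hnat n t
      set m : ℤ := ⌊(n : ℝ) * t⌋ with hmdef
      have h3 : ψ ((n : ℝ) * t) = ψ ((n : ℝ) * t - m) + (m : ℝ) * ψ 1 := by
        have harg := hadd ((n : ℝ) * t - m) ((m : ℝ) * 1)
        rw [hint] at harg
        have harg2 : (n : ℝ) * t - m + (m : ℝ) * 1 = (n : ℝ) * t := by ring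
        rw [harg2] at harg
        linarith
      have hfrac : |(n : ℝ) * t - m| ≤ 1 := by
        have := Int.floor_le ((n : ℝ) * t)
        have := Int.lt_floor_add_one ((n : ℝ) * t)
        rw [abs_le]
        constructor <;> linarith
      have h4 : |ψ ((n : ℝ) * t - m)| ≤ (c.N x + c.N z) / 2 := hbound _ hfrac
      have h5 : (n : ℝ) * θ = ψ ((n : ℝ) * t - m) + ((m : ℝ) - (n : ℝ) * t) * ψ 1 := by
        have h35 := h3.symm.trans h1
        rw [hθ]
        linear_combination -h35
      rw [h5]
      have h6 : |((m : ℝ) - (n : ℝ) * t) * ψ 1| ≤ |ψ 1| := by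
        rw [abs_mul]
        have h7 : |(m : ℝ) - (n : ℝ) * t| ≤ 1 := by
          rw [abs_sub_comm]
          exact hfrac
        nlinarith [abs_nonneg (ψ 1), abs_nonneg ((m : ℝ) - (n : ℝ) * t)]
      calc |ψ ((n : ℝ) * t - m) + ((m : ℝ) - (n : ℝ) * t) * ψ 1|
          ≤ |ψ ((n : ℝ) * t - m)| + |((m : ℝ) - (n : ℝ) * t) * ψ 1| := abs_add_le _ _
        _ ≤ B := by rw [hB]; linarith
    obtain ⟨n, hn⟩ := exists_nat_gt (B / |θ|)
    have hθpos : 0 < |θ| := abs_pos.mpr hθne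
    have : (n : ℝ) * |θ| ≤ B := by
      have := hkey n
      rwa [abs_mul, abs_of_nonneg (by positivity : (0:ℝ) ≤ (n:ℝ))] at this
    have : B / |θ| ≥ (n : ℝ) := by
      rw [ge_iff_le, le_div_iff₀ hθpos]
      exact this
    linarith
  rw [hone] at key
  simpa only [hψ] using key

end ClosedQF

end AuxStmt5b
noncomputable section AuxStmt5c

open MeasureTheory Filter
open scoped RealInnerProductSpace

namespace ClosedQF

variable {H : Type*} [NormedAddCommGroup H] [InnerProductSpace ℂ H] (c : ClosedQF H)

/-- The inner product core on the domain given by polarization of the form norm. -/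
def core : InnerProductSpace.Core ℝ c.Dom where
  inner x y := c.P x.1 y.1
  conj_inner_symm x y := by
    simp only [starRingEnd_apply, star_trivial]
    exact c.P_comm y.2 x.2
  re_inner_nonneg x := by
    simpa only [RCLike.re_to_real, c.P_self x.2] using c.N_nonneg x.2
  add_left x y z := c.P_add_left x.2 y.2 z.2
  smul_left x y r := by
    simp only [starRingEnd_apply, star_trivial]
    exact c.P_smul_left r x.2 y.2
  definite x hx := by
    have h1 : c.N x.1 = 0 := by rwa [← c.P_self x.2]
    have h2 := c.N_lower x.2
    rw [h1] at h2
    have h3 : (0:ℝ) < c.mu' - c.lam := by linarith [c.hmu]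
    have h4 : ‖x.1‖ ^ 2 ≤ 0 := by
      by_contra hcon
      push_neg at hcon
      nlinarith
    have h5 : x.1 = 0 := by
      have := norm_nonneg x.1
      have h6 : ‖x.1‖ = 0 := by nlinarith
      exact norm_eq_zero.mp h6
    exact Subtype.ext h5

instance : NormedAddCommGroup c.Dom := c.core.toNormedAddCommGroup
instance : InnerProductSpace ℝ c.Dom := InnerProductSpace.ofCore c.core.toCore

lemma inner_dom (x y : c.Dom) : ⟪x, y⟫ = c.P x.1 y.1 := rfl

lemma norm_sq_dom (x : c.Dom) : ‖x‖ ^ 2 = c.N x.1 := by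
  rw [← real_inner_self_eq_norm_sq, inner_dom, c.P_self x.2]

lemma norm_dom (x : c.Dom) : ‖x‖ = Real.sqrt (c.N x.1) := by
  rw [← norm_sq_dom, Real.sqrt_sq (norm_nonneg x)]

lemma val_sub (x y : c.Dom) : (x - y).1 = x.1 - y.1 := rfl

instance : CompleteSpace c.Dom := by
  apply Metric.complete_of_cauchySeq_tendsto
  intro u hu
  have hcau : ∀ ε > (0 : ℝ), ∃ N : ℕ, ∀ i ≥ N, ∀ j ≥ N,
      c.q.normSq c.mu' ((u i).1 - (u j).1) < ε := by
    intro ε hε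
    obtain ⟨N, hN⟩ := Metric.cauchySeq_iff.mp hu (Real.sqrt ε) (Real.sqrt_pos.mpr hε)
    refine ⟨N, fun i hi j hj => ?_⟩
    have h1 := hN i hi j hj
    rw [dist_eq_norm] at h1
    have h2 : ‖u i - u j‖ ^ 2 < Real.sqrt ε ^ 2 :=
      pow_lt_pow_left₀ h1 (norm_nonneg _) (by norm_num)
    rw [Real.sq_sqrt hε.le] at h2
    have h3 : c.q.normSq c.mu' ((u i).1 - (u j).1) = ‖u i - u j‖ ^ 2 := by
      rw [norm_sq_dom, ← val_sub]; rfl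
    linarith
  obtain ⟨w, hw, hten⟩ := c.hclosed (fun n => (u n).1) (fun n => (u n).2) hcau
  refine ⟨(show c.Dom from ⟨w, hw⟩), ?_⟩
  rw [tendsto_iff_dist_tendsto_zero]
  have hdist : ∀ n, dist (u n) (show c.Dom from ⟨w, hw⟩) = Real.sqrt (c.q.normSq c.mu' ((u n).1 - w)) := by
    intro n
    rw [dist_eq_norm, norm_dom]
    rfl
  simp only [hdist]
  have := (Real.continuous_sqrt.tendsto' 0 0 Real.sqrt_zero).comp hten
  exact this

/-- The inclusion of the form domain into the ambient Hilbert space. -/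
def T : c.Dom →L[ℝ] H :=
  LinearMap.mkContinuous
    { toFun := fun x => x.1
      map_add' := fun _ _ => rfl
      map_smul' := fun _ _ => rfl }
    (Real.sqrt (c.mu' - c.lam))⁻¹
    (by
      intro x
      have h0 : (0:ℝ) < c.mu' - c.lam := by linarith [c.hmu]
      have h1 : (c.mu' - c.lam) * ‖x.1‖ ^ 2 ≤ ‖x‖ ^ 2 := by
        rw [norm_sq_dom]
        exact c.N_lower x.2
      have h2 : ‖x.1‖ ≤ Real.sqrt (‖x‖ ^ 2 / (c.mu' - c.lam)) := by
        rw [← Real.sqrt_sq (norm_nonneg x.1)]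
        apply Real.sqrt_le_sqrt
        rw [le_div_iff₀ h0]
        linarith
      have h3 : Real.sqrt (‖x‖ ^ 2 / (c.mu' - c.lam))
          = (Real.sqrt (c.mu' - c.lam))⁻¹ * ‖x‖ := by
        rw [div_eq_mul_inv, Real.sqrt_mul (sq_nonneg _), Real.sqrt_sq (norm_nonneg x),
          Real.sqrt_inv, mul_comm]
      calc ‖x.1‖ ≤ _ := h2
        _ = _ := h3)

lemma T_apply (x : c.Dom) : c.T x = x.1 := rfl

end ClosedQF

end AuxStmt5c
noncomputable section AuxStmt5d

open MeasureTheory Filter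
open scoped RealInnerProductSpace

attribute [local instance] InnerProductSpace.complexToReal

namespace ClosedQF

variable {H : Type*} [NormedAddCommGroup H] [InnerProductSpace ℂ H] [CompleteSpace H]
  (c : ClosedQF H)

lemma weak_tendsto (x : ℕ → c.Dom) (M : ℝ) (hM : ∀ n, ‖x n‖ ≤ M)
    (hT : Tendsto (fun n => ‖c.T (x n)‖) atTop (nhds 0)) (y : c.Dom) :
    Tendsto (fun n => ⟪x n, y⟫) atTop (nhds 0) := by
  set A := ContinuousLinearMap.adjoint c.T with hA
  have hdense : ∀ ε > (0:ℝ), ∃ z : H, ‖y - A z‖ < ε := by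
    have horth : (LinearMap.range (A : H →ₗ[ℝ] c.Dom))ᗮ = ⊥ := by
      rw [Submodule.eq_bot_iff]
      intro w hw
      have h2 := hw (A (c.T w)) (LinearMap.mem_range_self _ _)
      rw [hA, ContinuousLinearMap.adjoint_inner_left] at h2
      have h1 : c.T w = 0 := inner_self_eq_zero.mp h2
      exact Subtype.ext h1
    have hcl : (LinearMap.range (A : H →ₗ[ℝ] c.Dom)).topologicalClosure = ⊤ := by
      rw [← Submodule.orthogonal_orthogonal_eq_closure, horth, Submodule.bot_orthogonal_eq_top]
    intro ε hε
    have hy : y ∈ closure ((LinearMap.range (A : H →ₗ[ℝ] c.Dom) : Submodule ℝ c.Dom) : Set c.Dom) := by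
      have h1 : y ∈ (LinearMap.range (A : H →ₗ[ℝ] c.Dom)).topologicalClosure := by
        rw [hcl]; trivial
      exact h1
    rcases Metric.mem_closure_iff.mp hy ε hε with ⟨z, hz, hdist⟩
    rcases hz with ⟨w, rfl⟩
    exact ⟨w, by rwa [dist_eq_norm] at hdist⟩
  have hM1 : (0:ℝ) < M + 1 := by
    have := le_trans (norm_nonneg (x 0)) (hM 0)
    linarith
  rw [Metric.tendsto_atTop]
  intro ε hε
  obtain ⟨z, hz⟩ := hdense (ε / (2 * (M + 1))) (by positivity)
  have hz1 : (0:ℝ) < ‖z‖ + 1 := by positivity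
  obtain ⟨N, hN⟩ := Metric.tendsto_atTop.mp hT (ε / (2 * (‖z‖ + 1))) (by positivity)
  refine ⟨N, fun n hn => ?_⟩
  have hTn : ‖c.T (x n)‖ < ε / (2 * (‖z‖ + 1)) := by
    have := hN n hn
    rwa [Real.dist_eq, abs_sub_comm, zero_sub, abs_neg, abs_of_nonneg (norm_nonneg _)] at this
  have hsplit : ⟪x n, y⟫ = ⟪x n, y - A z⟫ + (inner ℝ z (c.T (x n)) : ℝ) := by
    have h1 : ⟪x n, A z⟫ = (inner ℝ z (c.T (x n)) : ℝ) := by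
      rw [real_inner_comm, hA, ContinuousLinearMap.adjoint_inner_left]
    rw [inner_sub_right, h1]
    ring
  have hb1 : |⟪x n, y - A z⟫| ≤ ‖x n‖ * ‖y - A z‖ := abs_real_inner_le_norm _ _
  have hb2 : |(inner ℝ z (c.T (x n)) : ℝ)| ≤ ‖z‖ * ‖c.T (x n)‖ := abs_real_inner_le_norm _ _
  rw [Real.dist_eq, sub_zero]
  have hxn := hM n
  have hxnn := norm_nonneg (x n)
  have hyz := norm_nonneg (y - A z)
  have hzn := norm_nonneg z
  have hTnn := norm_nonneg (c.T (x n))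
  calc |⟪x n, y⟫| ≤ |⟪x n, y - A z⟫| + |(inner ℝ z (c.T (x n)) : ℝ)| := by
        rw [hsplit]; exact abs_add_le _ _
    _ < ε := by
        have e3 : (M + 1) * (ε / (2 * (M + 1))) = ε / 2 := by
          field_simp
        have e4 : (‖z‖ + 1) * (ε / (2 * (‖z‖ + 1))) = ε / 2 := by
          field_simp
        have e5 : |⟪x n, y - A z⟫| ≤ ε / 2 := by
          rw [← e3]
          calc |⟪x n, y - A z⟫| ≤ ‖x n‖ * ‖y - A z‖ := hb1
            _ ≤ (M + 1) * (ε / (2 * (M + 1))) := by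
                apply mul_le_mul (by linarith) hz.le hyz (by linarith)
        have e2' : (0:ℝ) < ε / (2 * (‖z‖ + 1)) := by positivity
        have e6 : |(inner ℝ z (c.T (x n)) : ℝ)| < ε / 2 := by
          rw [← e4]
          calc |(inner ℝ z (c.T (x n)) : ℝ)| ≤ ‖z‖ * ‖c.T (x n)‖ := hb2
            _ ≤ ‖z‖ * (ε / (2 * (‖z‖ + 1))) := mul_le_mul_of_nonneg_left hTn.le hzn
            _ < (‖z‖ + 1) * (ε / (2 * (‖z‖ + 1))) := by nlinarith
        linarith

lemma exists_subseq (x : ℕ → c.Dom) (M : ℝ) (hM : ∀ n, ‖x n‖ ≤ M)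
    (hT : Tendsto (fun n => ‖c.T (x n)‖) atTop (nhds 0)) :
    ∃ φ : ℕ → ℕ, ∀ K : ℕ,
      ‖((K : ℝ) + 1)⁻¹ • ∑ k ∈ Finset.range (K + 1), x (φ k)‖ ^ 2
        ≤ (M ^ 2 + 2) / ((K : ℝ) + 1) := by
  classical
  have hM0 : (0:ℝ) ≤ M := le_trans (norm_nonneg (x 0)) (hM 0)
  have hweak := c.weak_tendsto x M hM hT
  have key : ∀ (k : ℕ) (g : ℕ → ℕ), ∃ n : ℕ, ∀ j, j < k →
      |⟪x n, x (g j)⟫| ≤ 1 / ((k : ℝ) + 1) := by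
    intro k g
    have hev : ∀ᶠ n in atTop, ∀ j ∈ Finset.range k, |⟪x n, x (g j)⟫| ≤ 1 / ((k : ℝ) + 1) := by
      rw [Filter.eventually_all_finset]
      intro j _
      have h1 : Tendsto (fun n => |⟪x n, x (g j)⟫|) atTop (nhds 0) := by
        have := (hweak (x (g j))).abs
        simpa using this
      have h2 : (0:ℝ) < 1 / ((k : ℝ) + 1) := by positivity
      exact ((h1.eventually_lt_const h2)).mono fun n hn => hn.le
    obtain ⟨n, hn⟩ := hev.exists
    exact ⟨n, fun j hj => hn j (Finset.mem_range.mpr hj)⟩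
  -- recursive choice of the subsequence
  let seq : ℕ → ℕ → ℕ := fun k => Nat.rec (motive := fun _ => ℕ → ℕ) (fun _ => 0)
    (fun m prev => Function.update prev (m + 1) (Classical.choose (key (m + 1) prev))) k
  have hseq_succ : ∀ m, seq (m + 1) =
      Function.update (seq m) (m + 1) (Classical.choose (key (m + 1) (seq m))) := fun m => rfl
  set φ : ℕ → ℕ := fun k => seq k k with hφdef
  have hstab : ∀ m j, j ≤ m → seq m j = φ j := by
    intro m
    induction m with
    | zero => intro j hj; rw [Nat.le_zero.mp hj]
    | succ m ih =>
      intro j hj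
      rcases eq_or_lt_of_le hj with h | h
      · rw [h]
      · have hj' : j ≤ m := Nat.lt_succ_iff.mp h
        rw [hseq_succ, Function.update_of_ne (by omega : j ≠ m + 1)]
        exact ih j hj'
  have hφ : ∀ k j, j < k → |⟪x (φ k), x (φ j)⟫| ≤ 1 / ((k : ℝ) + 1) := by
    intro k j hjk
    cases k with
    | zero => omega
    | succ m =>
      have hc := Classical.choose_spec (key (m + 1) (seq m))
      have heq : φ (m + 1) = Classical.choose (key (m + 1) (seq m)) := by
        show seq (m + 1) (m + 1) = _
        rw [hseq_succ, Function.update_self]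
      rw [heq]
      have h2 := hc j hjk
      rwa [hstab m j (Nat.lt_succ_iff.mp hjk)] at h2
  refine ⟨φ, ?_⟩
  have hs : ∀ K : ℕ, ‖∑ k ∈ Finset.range (K + 1), x (φ k)‖ ^ 2
      ≤ ((K : ℝ) + 1) * (M ^ 2 + 2) := by
    intro K
    induction K with
    | zero =>
      simp only [Finset.range_one, Finset.sum_singleton, Nat.cast_zero, zero_add, one_mul]
      have h1 : ‖x (φ 0)‖ ^ 2 ≤ M ^ 2 := by
        have := hM (φ 0)
        nlinarith [norm_nonneg (x (φ 0))]
      linarith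
    | succ K ih =>
      rw [Finset.sum_range_succ, norm_add_sq_real]
      have hinner : ⟪∑ k ∈ Finset.range (K + 1), x (φ k), x (φ (K + 1))⟫ ≤ 1 := by
        rw [sum_inner]
        have hstep : ∀ k ∈ Finset.range (K + 1),
            ⟪x (φ k), x (φ (K + 1))⟫ ≤ 1 / ((K : ℝ) + 1 + 1) := by
          intro k hk
          have h1 := hφ (K + 1) k (Finset.mem_range.mp hk)
          rw [real_inner_comm] at h1
          push_cast at h1
          exact le_trans (le_abs_self _) h1
        calc ∑ k ∈ Finset.range (K + 1), ⟪x (φ k), x (φ (K + 1))⟫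
            ≤ ∑ _k ∈ Finset.range (K + 1), 1 / ((K : ℝ) + 1 + 1) :=
              Finset.sum_le_sum hstep
          _ = ((K : ℝ) + 1) * (1 / ((K : ℝ) + 1 + 1)) := by
              rw [Finset.sum_const, Finset.card_range]
              push_cast
              ring
          _ ≤ 1 := by
              rw [mul_one_div, div_le_one (by positivity)]
              linarith
      have hb2 : ‖x (φ (K + 1))‖ ^ 2 ≤ M ^ 2 := by
        have := hM (φ (K + 1))
        nlinarith [norm_nonneg (x (φ (K + 1)))]
      push_cast
      push_cast at ih
      linarith
  intro K
  have hnorm : ‖((K : ℝ) + 1)⁻¹ • ∑ k ∈ Finset.range (K + 1), x (φ k)‖ ^ 2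
      = (((K : ℝ) + 1)⁻¹) ^ 2 * ‖∑ k ∈ Finset.range (K + 1), x (φ k)‖ ^ 2 := by
    rw [norm_smul, mul_pow]
    congr 1
    rw [Real.norm_eq_abs, abs_of_pos (by positivity)]
  rw [hnorm]
  have hK : (0:ℝ) < (K : ℝ) + 1 := by positivity
  calc (((K : ℝ) + 1)⁻¹) ^ 2 * ‖∑ k ∈ Finset.range (K + 1), x (φ k)‖ ^ 2
      ≤ (((K : ℝ) + 1)⁻¹) ^ 2 * (((K : ℝ) + 1) * (M ^ 2 + 2)) := by
        apply mul_le_mul_of_nonneg_left (hs K) (by positivity)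
    _ = (M ^ 2 + 2) / ((K : ℝ) + 1) := by
        field_simp

end ClosedQF

end AuxStmt5d
noncomputable section AuxStmt5e

open MeasureTheory Filter

namespace QForm

variable {X : Type*} [MeasurableSpace X] {μ : Measure X}

lemma norm_eq_of_ae_abs_eq {f g : Lp ℂ 2 μ}
    (h : ∀ᵐ x ∂μ, ‖g x‖ = ‖f x‖) : ‖g‖ = ‖f‖ := by
  refine le_antisymm (Lp.norm_le_norm_of_ae_le ?_) (Lp.norm_le_norm_of_ae_le ?_) <;>
    · filter_upwards [h] with x hx
      rw [hx]

set_option maxHeartbeats 1000000 in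
lemma bd_construction (q : QForm (Lp ℂ 2 μ)) (hBD : q.BeurlingDeny) {lam : ℝ}
    (hlb : ∀ f ∈ q.dom, -lam * ‖f‖ ^ 2 ≤ q.Q f)
    {v : Lp ℂ 2 μ} (hv : v ∈ q.dom)
    (hvpos : ∀ᵐ x ∂μ, (v x).im = 0 ∧ 0 ≤ (v x).re)
    {f : Lp ℂ 2 μ} (hf : f ∈ q.dom) :
    ∃ g ∈ q.dom,
      (∀ᵐ x ∂μ, (g x).im = 0 ∧ 0 ≤ (g x).re ∧ (g x).re ≤ (v x).re ∧
        ‖g x‖ ≤ ‖f x‖ ∧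
        ‖g x - v x‖ ≤ ‖f x - v x‖) ∧
      q.Q g ≤ 2 * q.Q f + 4 * (max lam 0) * ‖f‖ ^ 2 + 2 * q.Q v
        + 2 * (max lam 0) * (‖f‖ + ‖v‖) ^ 2 := by
  obtain ⟨hreal, habs⟩ := hBD
  set Λ := max lam 0 with hΛdef
  have hΛ : 0 ≤ Λ := le_max_right _ _
  obtain ⟨fc, hfc, hfcae, hfcQ⟩ := hreal f hf
  set r : Lp ℂ 2 μ := (2⁻¹ : ℂ) • (f + fc) with hrdef
  have hr : r ∈ q.dom := Submodule.smul_mem _ _ (Submodule.add_mem _ hf hfc)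
  obtain ⟨a, ha, haae, haQ⟩ := habs r hr
  set rp : Lp ℂ 2 μ := (2⁻¹ : ℂ) • (r + a) with hrpdef
  have hrp : rp ∈ q.dom := Submodule.smul_mem _ _ (Submodule.add_mem _ hr ha)
  set d : Lp ℂ 2 μ := rp - v with hddef
  have hd : d ∈ q.dom := Submodule.sub_mem _ hrp hv
  obtain ⟨b, hb, hbae, hbQ⟩ := habs d hd
  set g : Lp ℂ 2 μ := (2⁻¹ : ℂ) • (rp + v - b) with hgdef
  have hg : g ∈ q.dom := Submodule.smul_mem _ _
    (Submodule.sub_mem _ (Submodule.add_mem _ hrp hv) hb)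
  refine ⟨g, hg, ?_, ?_⟩
  · -- the almost-everywhere pointwise properties
    filter_upwards [hfcae, haae, hbae, hvpos,
      Lp.coeFn_smul (2⁻¹ : ℂ) (f + fc), Lp.coeFn_add f fc,
      Lp.coeFn_smul (2⁻¹ : ℂ) (r + a), Lp.coeFn_add r a,
      Lp.coeFn_sub rp v, Lp.coeFn_smul (2⁻¹ : ℂ) (rp + v - b),
      Lp.coeFn_sub (rp + v) b, Lp.coeFn_add rp v]
      with x hfcx hax hbx hvx h1 h2 h3 h4 h5 h6 h7 h8
    set t : ℝ := (f x).re with htdef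
    set w : ℝ := (v x).re with hwdef
    obtain ⟨hvim, hw⟩ := hvx
    have hvr : v x = (w : ℂ) := by
      apply Complex.ext <;> simp [hvim, hwdef]
    have hrx : r x = (t : ℂ) := by
      rw [hrdef, h1, Pi.smul_apply, h2, Pi.add_apply, hfcx, smul_eq_mul, Complex.add_conj]
      rw [htdef]
      push_cast
      ring
    have hax' : a x = ((|t| : ℝ) : ℂ) := by
      rw [hax, hrx, Complex.norm_real, Real.norm_eq_abs]
    have hrpx : rp x = ((max t 0 : ℝ) : ℂ) := by
      rw [hrpdef, h3, Pi.smul_apply, h4, Pi.add_apply, hrx, hax', smul_eq_mul]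
      have hmax : max t 0 = (t + |t|) / 2 := by
        rcases le_total t 0 with h | h
        · rw [max_eq_right h, abs_of_nonpos h]; ring
        · rw [max_eq_left h, abs_of_nonneg h]; ring
      rw [hmax]
      push_cast
      ring
    set p : ℝ := max t 0 with hpdef
    have hdx : d x = ((p - w : ℝ) : ℂ) := by
      rw [hddef, h5, Pi.sub_apply, hrpx, hvr]
      push_cast
      ring
    have hbx' : b x = ((|p - w| : ℝ) : ℂ) := by
      rw [hbx, hdx, Complex.norm_real, Real.norm_eq_abs]
    have hgx : g x = ((min p w : ℝ) : ℂ) := by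
      rw [hgdef, h6, Pi.smul_apply, h7, Pi.sub_apply, h8, Pi.add_apply, hrpx, hvr, hbx', smul_eq_mul]
      have hmin : min p w = (p + w - |p - w|) / 2 := by
        rcases le_total p w with h | h
        · rw [min_eq_left h, abs_of_nonpos (by linarith)]; ring
        · rw [min_eq_right h, abs_of_nonneg (by linarith)]; ring
      rw [hmin]
      push_cast
      ring
    have hp0 : 0 ≤ p := le_max_right _ _
    have hmin0 : 0 ≤ min p w := le_min hp0 hw
    have hpabs : p ≤ |t| := max_le (le_abs_self t) (abs_nonneg t)
    have habsf : |t| ≤ ‖f x‖ := Complex.abs_re_le_norm (f x)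
    refine ⟨by rw [hgx]; simp, by rw [hgx]; simpa using hmin0,
      by rw [hgx]; simpa using min_le_right p w, ?_, ?_⟩
    · rw [hgx, Complex.norm_real, Real.norm_eq_abs, abs_of_nonneg hmin0]
      calc min p w ≤ p := min_le_left _ _
        _ ≤ |t| := hpabs
        _ ≤ ‖f x‖ := habsf
    · have hsub : g x - v x = ((min p w - w : ℝ) : ℂ) := by
        rw [hgx, hvr]
        push_cast
        ring
      rw [hsub, Complex.norm_real, Real.norm_eq_abs]
      have hre : |t - w| ≤ ‖f x - v x‖ := by
        have h9 : (f x - v x).re = t - w := by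
          simp [Complex.sub_re, htdef, hwdef]
        have := Complex.abs_re_le_norm (f x - v x)
        rwa [h9] at this
      have hmw : |min p w - w| ≤ |t - w| := by
        rcases le_total w p with h | h
        · rw [min_eq_right h]
          simpa using abs_nonneg (t - w)
        · rw [min_eq_left h, abs_of_nonpos (by linarith)]
          have ht : t ≤ p := le_max_left _ _
          have : w - t ≤ |t - w| := by
            rw [abs_sub_comm]
            exact le_abs_self _
          linarith
      linarith
  · -- the bound on the quadratic form
    have hnfc : ‖fc‖ = ‖f‖ := norm_eq_of_ae_abs_eq <| by
      filter_upwards [hfcae] with x hx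
      rw [hx, Complex.norm_conj]
    have hnr : ‖r‖ ≤ ‖f‖ := by
      rw [hrdef]
      calc ‖(2⁻¹ : ℂ) • (f + fc)‖ = ‖(2⁻¹ : ℂ)‖ * ‖f + fc‖ := norm_smul _ _
        _ ≤ ‖(2⁻¹ : ℂ)‖ * (‖f‖ + ‖fc‖) := by
            apply mul_le_mul_of_nonneg_left (norm_add_le _ _) (norm_nonneg _)
        _ = ‖f‖ := by
            rw [hnfc, show ‖(2⁻¹ : ℂ)‖ = 1/2 by norm_num]
            ring
    have hna : ‖a‖ = ‖r‖ := norm_eq_of_ae_abs_eq <| by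
      filter_upwards [haae] with x hx
      rw [hx]
      simp
    have hQr : q.Q r ≤ q.Q f + Λ * ‖f‖ ^ 2 := by
      have h1 := q.Q_add_le hlb hf hfc
      have h2 : ‖f - fc‖ ^ 2 ≤ 4 * ‖f‖ ^ 2 := by
        have h3 : ‖f - fc‖ ≤ 2 * ‖f‖ := by
          calc ‖f - fc‖ ≤ ‖f‖ + ‖fc‖ := norm_sub_le _ _
            _ = 2 * ‖f‖ := by rw [hnfc]; ring
        nlinarith [norm_nonneg (f - fc), norm_nonneg f]
      have h4 := mul_le_mul_of_nonneg_left h2 hΛ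
      have h5 : q.Q r = q.Q (f + fc) / 4 := by
        rw [hrdef]
        exact q.Q_half (Submodule.add_mem _ hf hfc)
      rw [← hΛdef] at h1
      linarith [hfcQ.symm.le, h1]
    have hQrp : q.Q rp ≤ q.Q f + 2 * Λ * ‖f‖ ^ 2 := by
      have h1 := q.Q_add_le hlb hr ha
      have h2 : ‖r - a‖ ^ 2 ≤ 4 * ‖f‖ ^ 2 := by
        have h3 : ‖r - a‖ ≤ 2 * ‖f‖ := by
          calc ‖r - a‖ ≤ ‖r‖ + ‖a‖ := norm_sub_le _ _
            _ = ‖r‖ + ‖r‖ := by rw [hna]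
            _ ≤ 2 * ‖f‖ := by linarith
        nlinarith [norm_nonneg (r - a), norm_nonneg f, hnr, norm_nonneg r]
      have h4 := mul_le_mul_of_nonneg_left h2 hΛ
      have h5 : q.Q rp = q.Q (r + a) / 4 := by
        rw [hrpdef]
        exact q.Q_half (Submodule.add_mem _ hr ha)
      rw [← hΛdef] at h1
      linarith [haQ]
    have hnrp : ‖rp‖ ≤ ‖f‖ := by
      rw [hrpdef]
      calc ‖(2⁻¹ : ℂ) • (r + a)‖ = ‖(2⁻¹ : ℂ)‖ * ‖r + a‖ := norm_smul _ _
        _ ≤ ‖(2⁻¹ : ℂ)‖ * (‖r‖ + ‖a‖) := by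
            apply mul_le_mul_of_nonneg_left (norm_add_le _ _) (norm_nonneg _)
        _ ≤ ‖f‖ := by
            rw [hna, show ‖(2⁻¹ : ℂ)‖ = 1/2 by norm_num]
            linarith
    have hnfv : ‖rp - v‖ ≤ ‖f‖ + ‖v‖ := by
      calc ‖rp - v‖ ≤ ‖rp‖ + ‖v‖ := norm_sub_le _ _
        _ ≤ ‖f‖ + ‖v‖ := by linarith
    have hnfv2 : ‖rp + v‖ ≤ ‖f‖ + ‖v‖ := by
      calc ‖rp + v‖ ≤ ‖rp‖ + ‖v‖ := norm_add_le _ _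
        _ ≤ ‖f‖ + ‖v‖ := by linarith
    have hsq1 : ‖rp - v‖ ^ 2 ≤ (‖f‖ + ‖v‖) ^ 2 := by
      nlinarith [hnfv, norm_nonneg (rp - v), add_nonneg (norm_nonneg f) (norm_nonneg v)]
    have hsq2 : ‖rp + v‖ ^ 2 ≤ (‖f‖ + ‖v‖) ^ 2 := by
      nlinarith [hnfv2, norm_nonneg (rp + v), add_nonneg (norm_nonneg f) (norm_nonneg v)]
    have hQd : q.Q d ≤ 2 * q.Q rp + 2 * q.Q v + Λ * (‖f‖ + ‖v‖) ^ 2 := by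
      have h1 := q.Q_sub_le hlb hrp hv
      have h2 := mul_le_mul_of_nonneg_left hsq2 hΛ
      rw [← hΛdef] at h1
      rw [hddef]
      linarith
    have hQs : q.Q (rp + v) ≤ 2 * q.Q rp + 2 * q.Q v + Λ * (‖f‖ + ‖v‖) ^ 2 := by
      have h1 := q.Q_add_le hlb hrp hv
      have h2 := mul_le_mul_of_nonneg_left hsq1 hΛ
      rw [← hΛdef] at h1
      linarith
    have hnb : ‖b‖ = ‖d‖ := norm_eq_of_ae_abs_eq <| by
      filter_upwards [hbae] with x hx
      rw [hx]
      simp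
    have hnsb : ‖rp + v + b‖ ^ 2 ≤ 4 * (‖f‖ + ‖v‖) ^ 2 := by
      have h1 : ‖rp + v + b‖ ≤ 2 * (‖f‖ + ‖v‖) := by
        calc ‖rp + v + b‖ ≤ ‖rp + v‖ + ‖b‖ := norm_add_le _ _
          _ ≤ (‖f‖ + ‖v‖) + ‖d‖ := by rw [hnb]; linarith
          _ ≤ 2 * (‖f‖ + ‖v‖) := by rw [hddef]; linarith
      nlinarith [h1, norm_nonneg (rp + v + b), add_nonneg (norm_nonneg f) (norm_nonneg v)]
    have hQg : q.Q g = q.Q (rp + v - b) / 4 := by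
      rw [hgdef]
      exact q.Q_half (Submodule.sub_mem _ (Submodule.add_mem _ hrp hv) hb)
    have h1 := q.Q_sub_le hlb (Submodule.add_mem _ hrp hv) hb
    rw [← hΛdef] at h1
    have h2 := mul_le_mul_of_nonneg_left hnsb hΛ
    rw [hQg]
    linarith [hbQ, hQd, hQs, hQrp]

end QForm

end AuxStmt5e
noncomputable section AuxStmt5f

open MeasureTheory Filter

lemma Lp.coeFn_finsetSum {X : Type*} [MeasurableSpace X] {μ : Measure X}
    {ι : Type*} (s : Finset ι) (F : ι → Lp ℂ 2 μ) :
    ⇑(∑ i ∈ s, F i) =ᵐ[μ] fun x => ∑ i ∈ s, F i x := by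
  classical
  induction s using Finset.cons_induction with
  | empty =>
    simp only [Finset.sum_empty]
    filter_upwards [Lp.coeFn_zero ℂ 2 μ] with x hx
    simpa using hx
  | cons a s ha ih =>
    simp only [Finset.sum_cons]
    filter_upwards [Lp.coeFn_add (F a) (∑ i ∈ s, F i), ih] with x h1 h2
    rw [h1, Pi.add_apply, h2]

lemma tendsto_zero_of_sq_le {u b : ℕ → ℝ} (h0 : ∀ n, 0 ≤ u n)
    (hle : ∀ n, u n ^ 2 ≤ b n) (hb : Tendsto b atTop (nhds 0)) :
    Tendsto u atTop (nhds 0) := by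
  have h1 : Tendsto (fun n => u n ^ 2) atTop (nhds 0) :=
    squeeze_zero (fun n => sq_nonneg _) hle hb
  have h2 := (Real.continuous_sqrt.tendsto' 0 0 (by simp)).comp h1
  have h3 : (fun n => Real.sqrt (u n ^ 2)) = u := by
    funext n
    exact Real.sqrt_sq (h0 n)
  rwa [Function.comp_def, h3] at h2

end AuxStmt5f
open MeasureTheory Filter in
set_option maxHeartbeats 1600000 in
set_option synthInstance.maxHeartbeats 400000 in
/-- Let `q` be a lower bounded closed quadratic form on `L²(X,μ)`
satisfying the first Beurling–Deny criterion and let `D_q ⊆ D(q)` be an ideal of `D(q)`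
which is dense with respect to the form norm. Then for every `0 ≤ v ∈ D(q)` there is a
sequence `(v_n)` in `D_q` with `0 ≤ v_n ≤ v` a.e. and `‖v_n − v‖_q → 0`. -/
theorem stmt5 {X : Type*} [MeasurableSpace X] {μ : Measure X}
    (q : QForm (Lp ℂ 2 μ)) (lam mu' : ℝ)
    (hlb : ∀ f ∈ q.dom, -lam * ‖f‖ ^ 2 ≤ q.Q f) (hmu : lam < mu')
    (hBD : q.BeurlingDeny) (hclosed : q.ClosedWith mu')
    (Dq : Submodule ℂ (Lp ℂ 2 μ)) (hDq : Dq ≤ q.dom)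
    (hideal : ∀ f ∈ Dq, ∀ g ∈ q.dom,
      (∀ᵐ x ∂μ, ‖g x‖ ≤ ‖f x‖) → g ∈ Dq)
    (hdense : ∀ f ∈ q.dom, ∀ ε > (0 : ℝ), ∃ g ∈ Dq, q.normSq mu' (f - g) < ε)
    (v : Lp ℂ 2 μ) (hv : v ∈ q.dom)
    (hvpos : ∀ᵐ x ∂μ, (v x).im = 0 ∧ 0 ≤ (v x).re) :
    ∃ u : ℕ → Lp ℂ 2 μ, (∀ n, u n ∈ Dq) ∧
      (∀ n, ∀ᵐ x ∂μ, (u n x).im = 0 ∧ 0 ≤ (u n x).re ∧ (u n x).re ≤ (v x).re) ∧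
      Filter.Tendsto (fun n => q.normSq mu' (u n - v)) Filter.atTop (nhds 0) := by
  classical
  set c : ClosedQF (Lp ℂ 2 μ) := ⟨q, lam, mu', hlb, hmu, hclosed⟩ with hcdef
  have hc0 : (0:ℝ) < mu' - lam := by linarith
  -- choose approximants from the dense ideal
  have hex : ∀ n : ℕ, ∃ f ∈ Dq, q.normSq mu' (v - f) < 1/((n:ℝ)+1) := by
    intro n
    exact hdense v hv _ (by positivity)
  choose f hfDq hfN using hex
  have hfdom : ∀ n, f n ∈ q.dom := fun n => hDq (hfDq n)
  -- apply the Beurling-Deny construction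
  have hcon := fun n => q.bd_construction hBD hlb hv hvpos (hfdom n)
  choose g hgdom hgae hgQ using hcon
  have hgDq : ∀ n, g n ∈ Dq :=
    fun n => hideal (f n) (hfDq n) (g n) (hgdom n) ((hgae n).mono fun x hx => hx.2.2.2.1)
  -- quantitative bounds
  have hNfv : ∀ n, c.N (f n - v) < 1/((n:ℝ)+1) := by
    intro n
    have h0 : f n - v = -(v - f n) := (neg_sub v (f n)).symm
    have h1 : c.N (f n - v) = q.normSq mu' (v - f n) := by
      rw [ClosedQF.N, h0]
      exact q.normSq_neg mu' (Submodule.sub_mem _ hv (hfdom n))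
    rw [h1]
    exact hfN n
  have hone : ∀ n : ℕ, 1/((n:ℝ)+1) ≤ 1 := by
    intro n
    rw [div_le_one (by positivity)]
    have : (0:ℝ) ≤ (n:ℝ) := Nat.cast_nonneg n
    linarith
  have hfvsq : ∀ n, ‖f n - v‖^2 ≤ 1/(mu'-lam) * (1/((n:ℝ)+1)) := by
    intro n
    have h2 := c.N_lower (Submodule.sub_mem _ (hfdom n) hv)
    have h3 : c.mu' - c.lam = mu' - lam := rfl
    rw [h3] at h2
    have h4 := hNfv n
    rw [mul_comm, ← le_div_iff₀ hc0] at h2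
    calc ‖f n - v‖^2 ≤ c.N (f n - v) / (mu' - lam) := h2
      _ ≤ 1/(mu'-lam) * (1/((n:ℝ)+1)) := by
          rw [div_eq_mul_one_div, mul_comm]
          apply mul_le_mul_of_nonneg_left h4.le (by positivity)
  have hfvsq1 : ∀ n, ‖f n - v‖^2 ≤ 1/(mu'-lam) := by
    intro n
    calc ‖f n - v‖^2 ≤ 1/(mu'-lam) * (1/((n:ℝ)+1)) := hfvsq n
      _ ≤ 1/(mu'-lam) * 1 := by
          apply mul_le_mul_of_nonneg_left (hone n) (by positivity)
      _ = 1/(mu'-lam) := mul_one _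
  set C0 : ℝ := ‖v‖ + Real.sqrt (1/(mu'-lam)) with hC0def
  have hC0 : 0 ≤ C0 := by positivity
  have hfle : ∀ n, ‖f n‖ ≤ C0 := by
    intro n
    have h1 : ‖f n‖ ≤ ‖v‖ + ‖f n - v‖ := by
      calc ‖f n‖ = ‖v + (f n - v)‖ := by rw [add_sub_cancel]
        _ ≤ ‖v‖ + ‖f n - v‖ := norm_add_le _ _
    have h2 : ‖f n - v‖ ≤ Real.sqrt (1/(mu'-lam)) := by
      rw [← Real.sqrt_sq (norm_nonneg (f n - v))]
      exact Real.sqrt_le_sqrt (hfvsq1 n)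
    rw [hC0def]
    linarith
  have hfsq : ∀ n, ‖f n‖^2 ≤ C0^2 := by
    intro n
    nlinarith [hfle n, norm_nonneg (f n)]
  set Λ : ℝ := max lam 0 with hΛdef
  have hΛ0 : 0 ≤ Λ := le_max_right _ _
  have hQf : ∀ n, q.Q (f n) ≤ 2 * c.N v + 2 + |mu'| * C0^2 := by
    intro n
    have h1 : c.N (f n) ≤ 2 * c.N v + 2 := by
      have h2 : v + (f n - v) = f n := by abel
      calc c.N (f n) = c.N (v + (f n - v)) := by rw [h2]
        _ ≤ 2 * c.N v + 2 * c.N (f n - v) :=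
            c.N_add_le hv (Submodule.sub_mem _ (hfdom n) hv)
        _ ≤ 2 * c.N v + 2 := by
            have h5 := (hNfv n).le.trans (hone n)
            linarith
    have h3 : q.Q (f n) = c.N (f n) - mu' * ‖f n‖^2 := by
      show q.Q (f n) = q.normSq mu' (f n) - mu' * ‖f n‖^2
      rw [QForm.normSq]
      ring
    have h4 : -(mu' * ‖f n‖^2) ≤ |mu'| * C0^2 := by
      have h5 : -(mu' * ‖f n‖^2) ≤ |mu'| * ‖f n‖^2 := by
        nlinarith [neg_abs_le mu', sq_nonneg ‖f n‖]
      calc -(mu' * ‖f n‖^2) ≤ |mu'| * ‖f n‖^2 := h5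
        _ ≤ |mu'| * C0^2 := mul_le_mul_of_nonneg_left (hfsq n) (abs_nonneg _)
    linarith
  set C2 : ℝ := 2*(2 * c.N v + 2 + |mu'| * C0^2) + 4*Λ*C0^2 + 2*q.Q v + 2*Λ*(C0+‖v‖)^2
    with hC2def
  have hQg : ∀ n, q.Q (g n) ≤ C2 := by
    intro n
    have h1 := hgQ n
    have hsq2 : (‖f n‖+‖v‖)^2 ≤ (C0+‖v‖)^2 := by
      nlinarith [hfle n, norm_nonneg (f n), norm_nonneg v]
    have h6 := mul_le_mul_of_nonneg_left (hfsq n) hΛ0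
    have h7 := mul_le_mul_of_nonneg_left hsq2 hΛ0
    have h8 := hQf n
    rw [hC2def]
    linarith
  have hgnorm : ∀ n, ‖g n‖ ≤ ‖v‖ := by
    intro n
    apply Lp.norm_le_norm_of_ae_le
    filter_upwards [hgae n, hvpos] with x hx hvx
    have hgr : g n x = (((g n x).re : ℝ) : ℂ) := by
      apply Complex.ext <;> simp [hx.1]
    have hvr : v x = (((v x).re : ℝ) : ℂ) := by
      apply Complex.ext <;> simp [hvx.1]
    rw [hgr, hvr,
      Complex.norm_real, Complex.norm_real, Real.norm_eq_abs, Real.norm_eq_abs,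
      abs_of_nonneg hx.2.1, abs_of_nonneg hvx.2]
    exact hx.2.2.1
  have hgvnorm : ∀ n, ‖g n - v‖ ≤ ‖f n - v‖ := by
    intro n
    apply Lp.norm_le_norm_of_ae_le
    filter_upwards [hgae n, Lp.coeFn_sub (g n) v, Lp.coeFn_sub (f n) v] with x hx h1 h2
    rw [h1, h2, Pi.sub_apply, Pi.sub_apply]
    exact hx.2.2.2.2
  set C3 : ℝ := 2*C2 + 2*q.Q v + Λ*(2*‖v‖)^2 + |mu'| * (2*‖v‖)^2 with hC3def
  have hNg : ∀ n, c.N (g n - v) ≤ C3 := by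
    intro n
    have h1 := q.Q_sub_le hlb (hgdom n) hv
    have h2 : ‖g n + v‖ ≤ 2*‖v‖ := by
      calc ‖g n + v‖ ≤ ‖g n‖ + ‖v‖ := norm_add_le _ _
        _ ≤ 2*‖v‖ := by linarith [hgnorm n]
    have h3 : ‖g n + v‖^2 ≤ (2*‖v‖)^2 := by
      nlinarith [norm_nonneg (g n + v), norm_nonneg v]
    have h4 : ‖g n - v‖ ≤ 2*‖v‖ := by
      calc ‖g n - v‖ ≤ ‖g n‖ + ‖v‖ := norm_sub_le _ _
        _ ≤ 2*‖v‖ := by linarith [hgnorm n]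
    have h5 : ‖g n - v‖^2 ≤ (2*‖v‖)^2 := by
      nlinarith [norm_nonneg (g n - v), norm_nonneg v]
    have h6 : c.N (g n - v) = q.Q (g n - v) + mu' * ‖g n - v‖^2 := rfl
    have h7 : mu' * ‖g n - v‖^2 ≤ |mu'| * (2*‖v‖)^2 := by
      have h8 : mu' * ‖g n - v‖^2 ≤ |mu'| * ‖g n - v‖^2 := by
        nlinarith [le_abs_self mu', sq_nonneg ‖g n - v‖]
      calc mu' * ‖g n - v‖^2 ≤ |mu'| * ‖g n - v‖^2 := h8
        _ ≤ |mu'| * (2*‖v‖)^2 := mul_le_mul_of_nonneg_left h5 (abs_nonneg _)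
    have h9 := mul_le_mul_of_nonneg_left h3 hΛ0
    have h10 := hQg n
    rw [h6, hC3def]
    linarith
  -- move to the form-domain Hilbert space
  set vD : c.Dom := ⟨v, hv⟩ with hvD
  set gD : ℕ → c.Dom := fun n => (⟨g n, hgdom n⟩ : c.Dom) with hgD
  set xD : ℕ → c.Dom := fun n => gD n - vD with hxD
  have hgval : ∀ n, c.T (gD n) = g n := fun n => rfl
  have hvval : c.T vD = v := rfl
  have hxval : ∀ n, c.T (xD n) = g n - v := by
    intro n
    have h1 : xD n = gD n - vD := by rw [hxD]
    rw [h1, map_sub, hgval, hvval]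
  set M : ℝ := Real.sqrt (max C3 0) with hM
  have hMle : ∀ n, ‖xD n‖ ≤ M := by
    intro n
    have h1 : ‖xD n‖^2 = c.N (g n - v) := by
      have h0 := c.norm_sq_dom (xD n)
      have h0' : (xD n).1 = c.T (xD n) := rfl
      rw [h0', hxval n] at h0
      exact h0
    have h2 : ‖xD n‖^2 ≤ max C3 0 := h1 ▸ ((hNg n).trans (le_max_left _ _))
    rw [← Real.sqrt_sq (norm_nonneg (xD n)), hM]
    exact Real.sqrt_le_sqrt h2
  have hTx : Tendsto (fun n => ‖c.T (xD n)‖) atTop (nhds 0) := by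
    apply tendsto_zero_of_sq_le (fun n => norm_nonneg _)
      (b := fun n => 1/(mu'-lam) * (1/((n:ℝ)+1)))
    · intro n
      rw [hxval n]
      have h1 : ‖g n - v‖^2 ≤ ‖f n - v‖^2 := by
        nlinarith [hgvnorm n, norm_nonneg (g n - v), norm_nonneg (f n - v)]
      exact h1.trans (hfvsq n)
    · have h2 := tendsto_one_div_add_atTop_nhds_zero_nat.const_mul (1/(mu'-lam))
      simpa using h2
  obtain ⟨φ, hφ⟩ := c.exists_subseq xD M hMle hTx
  set u : ℕ → Lp ℂ 2 μ := fun K => ((K:ℝ)+1)⁻¹ • ∑ k ∈ Finset.range (K+1), g (φ k)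
    with hu
  have hKpos : ∀ K : ℕ, (0:ℝ) < (K:ℝ)+1 := fun K => by positivity
  refine ⟨u, ?_, ?_, ?_⟩
  · intro K
    exact Submodule.smul_of_tower_mem Dq _
      (Submodule.sum_mem Dq fun k _ => hgDq (φ k))
  · intro K
    have hall : ∀ᵐ x ∂μ, ∀ k : ℕ, (g k x).im = 0 ∧ 0 ≤ (g k x).re ∧ (g k x).re ≤ (v x).re :=
      ae_all_iff.mpr fun k => (hgae k).mono fun x hx => ⟨hx.1, hx.2.1, hx.2.2.1⟩
    filter_upwards [hall, hvpos,
      Lp.coeFn_smul (((K:ℝ)+1)⁻¹) (∑ k ∈ Finset.range (K+1), g (φ k)),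
      Lp.coeFn_finsetSum (Finset.range (K+1)) (fun k => g (φ k))] with x hx hvx h1 h2
    have h3 : u K x = (((K:ℝ)+1)⁻¹ : ℝ) • (∑ k ∈ Finset.range (K+1), g (φ k) x) := by
      rw [hu, h1, Pi.smul_apply, h2]
    have him : (∑ k ∈ Finset.range (K+1), g (φ k) x).im = 0 := by
      rw [Complex.im_sum]
      exact Finset.sum_eq_zero fun k _ => (hx (φ k)).1
    have hre0 : 0 ≤ (∑ k ∈ Finset.range (K+1), g (φ k) x).re := by
      rw [Complex.re_sum]
      exact Finset.sum_nonneg fun k _ => (hx (φ k)).2.1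
    have hrele : (∑ k ∈ Finset.range (K+1), g (φ k) x).re ≤ ((K:ℝ)+1) * (v x).re := by
      rw [Complex.re_sum]
      have h4 := Finset.sum_le_card_nsmul (Finset.range (K+1))
        (fun k => (g (φ k) x).re) ((v x).re) (fun k _ => (hx (φ k)).2.2)
      rw [Finset.card_range, nsmul_eq_mul] at h4
      calc ∑ k ∈ Finset.range (K+1), (g (φ k) x).re ≤ ((K+1 : ℕ):ℝ) * (v x).re := h4
        _ = ((K:ℝ)+1) * (v x).re := by push_cast; ring
    refine ⟨?_, ?_, ?_⟩
    · rw [h3, Complex.smul_im, him]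
      simp
    · rw [h3, Complex.smul_re]
      exact smul_nonneg (by positivity) hre0
    · rw [h3, Complex.smul_re, smul_eq_mul]
      calc ((K:ℝ)+1)⁻¹ * (∑ k ∈ Finset.range (K+1), g (φ k) x).re
          ≤ ((K:ℝ)+1)⁻¹ * (((K:ℝ)+1) * (v x).re) := by
            apply mul_le_mul_of_nonneg_left hrele (by positivity)
        _ = (v x).re := by
            rw [← mul_assoc, inv_mul_cancel₀ (hKpos K).ne', one_mul]
  · -- convergence in the form norm
    have hval : ∀ K : ℕ, q.normSq mu' (u K - v)
        = ‖((K:ℝ)+1)⁻¹ • ∑ k ∈ Finset.range (K+1), xD (φ k)‖^2 := by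
      intro K
      have h1 : c.T (((K:ℝ)+1)⁻¹ • ∑ k ∈ Finset.range (K+1), xD (φ k)) = u K - v := by
        rw [ContinuousLinearMap.map_smul, _root_.map_sum]
        have h2 : ∀ k ∈ Finset.range (K+1), c.T (xD (φ k)) = g (φ k) - v :=
          fun k _ => rfl
        rw [Finset.sum_congr rfl h2, Finset.sum_sub_distrib, Finset.sum_const,
          Finset.card_range, hu]
        erw [smul_sub]
        congr 1
        rw [← Nat.cast_smul_eq_nsmul ℝ, smul_smul]
        have h3 : (((K:ℝ))+1)⁻¹ * ((K+1 : ℕ):ℝ) = 1 := by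
          rw [show ((K+1 : ℕ):ℝ) = (K:ℝ)+1 by push_cast; ring]
          exact inv_mul_cancel₀ (hKpos K).ne'
        rw [h3, one_smul]
      rw [c.norm_sq_dom]
      have h4 : (((K:ℝ)+1)⁻¹ • ∑ k ∈ Finset.range (K+1), xD (φ k) : c.Dom).1
          = c.T (((K:ℝ)+1)⁻¹ • ∑ k ∈ Finset.range (K+1), xD (φ k)) := rfl
      rw [h4, h1]
      rfl
    have hnonneg : ∀ K : ℕ, 0 ≤ q.normSq mu' (u K - v) := by
      intro K
      rw [hval K]
      positivity
    have hle : ∀ K : ℕ, q.normSq mu' (u K - v) ≤ (M^2+2)/((K:ℝ)+1) := by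
      intro K
      rw [hval K]
      exact hφ K
    have htend : Tendsto (fun K : ℕ => (M^2+2)/((K:ℝ)+1)) atTop (nhds 0) := by
      have h2 := tendsto_one_div_add_atTop_nhds_zero_nat.const_mul (M^2+2)
      simp only [mul_zero] at h2
      have h3 : (fun n : ℕ => (M^2+2) * (1/((n:ℝ)+1)))
          = fun n : ℕ => (M^2+2)/((n:ℝ)+1) := by
        funext n
        rw [mul_one_div]
      rwa [h3] at h2
    exact squeeze_zero hnonneg hle htend
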